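/- Let U be a finite set, ω_i > 0 for i ∈ U, and let A be a random subset of U with the rejective distribution of fixed size n: P(A = s) = ( Π_{i∈s} ω_i ) / ( Σ_{t⊆U,|t|=n} Π_{j∈t} ω_j ) for each s ⊆ U with |s| = n. Let V ⊆ U and B ⊆ U ∖ V with |B| ≤ n and n − |B| ≤ |V|. Then, conditionally on the event {A ∖ V = B} (which has positive probability), A ∩ V has the rejective distribution of fixed size n − |B| on V with the same odds weights; that is, for every t ⊆ V with |t| = n − |B|, P( A ∩ V = t | A ∖ V = B ) = ( Π_{i∈t} ω_i ) / ( Σ_{t'⊆V, |t'|=n−|B|} Π_{j∈t'} ω_j ). -/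

import Mathlib

open Finset



/-- Conditioning a rejective (conditional Poisson) sample of fixed size `n` on
its realization outside a fold `V` leaves a rejective sample of the remaining
size within `V`, with the same odds weights. -/
theorem rejective_conditional_rejective {ι : Type*} [DecidableEq ι]
    (U : Finset ι) (w : ι → ℝ) (hw : ∀ i ∈ U, 0 < w i)
    (n : ℕ) (hn : n ≤ U.card)
    (V : Finset ι) (hV : V ⊆ U)
    (B : Finset ι) (hB : B ⊆ U \ V) (hBn : B.card ≤ n)
    (hnB : n - B.card ≤ V.card) :
    (0 < ∑ s ∈ (U.powersetCard n).filter (fun s => s \ V = B),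
          (∏ i ∈ s, w i) / ∑ t ∈ U.powersetCard n, ∏ j ∈ t, w j)
    ∧ ∀ t ⊆ V, t.card = n - B.card →
        (∑ s ∈ (U.powersetCard n).filter (fun s => s \ V = B ∧ s ∩ V = t),
            (∏ i ∈ s, w i) / ∑ t' ∈ U.powersetCard n, ∏ j ∈ t', w j)
          / (∑ s ∈ (U.powersetCard n).filter (fun s => s \ V = B),
              (∏ i ∈ s, w i) / ∑ t' ∈ U.powersetCard n, ∏ j ∈ t', w j)
        = (∏ i ∈ t, w i)
            / ∑ t' ∈ V.powersetCard (n - B.card), ∏ j ∈ t', w j := by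
  have hBU : B ⊆ U := hB.trans (sdiff_subset)
  have hBV : Disjoint B V := by
    refine disjoint_left.2 fun i hi hiV => ?_
    exact (mem_sdiff.1 (hB hi)).2 hiV
  -- membership characterization
  have hmem : ∀ s, (s ∈ (U.powersetCard n).filter (fun s => s \ V = B)) ↔
      ∃ t ⊆ V, t.card = n - B.card ∧ s = B ∪ t := by
    intro s
    constructor
    · intro hs
      rw [mem_filter, mem_powersetCard] at hs
      obtain ⟨⟨hsU, hscard⟩, hsB⟩ := hs
      refine ⟨s ∩ V, inter_subset_right, ?_, ?_⟩
      · have : B.card + (s ∩ V).card = n := by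
          rw [← hsB, ← hscard]
          rw [← card_union_of_disjoint (disjoint_sdiff_inter s V), sdiff_union_inter]
        omega
      · rw [← hsB, sdiff_union_inter]
    · rintro ⟨t, htV, htc, rfl⟩
      have hdisj : Disjoint B t := hBV.mono_right htV
      rw [mem_filter, mem_powersetCard]
      refine ⟨⟨union_subset hBU (htV.trans hV), ?_⟩, ?_⟩
      · rw [card_union_of_disjoint hdisj, htc]; omega
      · rw [union_sdiff_distrib, sdiff_eq_self_of_disjoint hBV,
          sdiff_eq_empty_iff_subset.2 htV, union_empty]
  -- Z positive
  have hZpos : 0 < ∑ t ∈ U.powersetCard n, ∏ j ∈ t, w j := by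
    obtain ⟨t, htU, htc⟩ := U.exists_subset_card_eq hn
    refine Finset.sum_pos (fun t ht => ?_) ⟨t, mem_powersetCard.2 ⟨htU, htc⟩⟩
    exact Finset.prod_pos fun i hi => hw i ((mem_powersetCard.1 ht).1 hi)
  have hSVpos : 0 < ∑ t' ∈ V.powersetCard (n - B.card), ∏ j ∈ t', w j := by
    obtain ⟨t, htV, htc⟩ := V.exists_subset_card_eq hnB
    refine Finset.sum_pos (fun t ht => ?_) ⟨t, mem_powersetCard.2 ⟨htV, htc⟩⟩
    exact Finset.prod_pos fun i hi => hw i (hV ((mem_powersetCard.1 ht).1 hi))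
  have hBpos : 0 < ∏ i ∈ B, w i := Finset.prod_pos fun i hi => hw i (hBU hi)
  have hint : ∀ t ⊆ V, (B ∪ t) ∩ V = t := fun t htV => by
    rw [union_inter_distrib_right, disjoint_iff_inter_eq_empty.1 hBV,
      inter_eq_left.2 htV, empty_union]
  -- sum over filter equals prod_B * S_V
  have hsum : ∑ s ∈ (U.powersetCard n).filter (fun s => s \ V = B), ∏ i ∈ s, w i
      = (∏ i ∈ B, w i) * ∑ t' ∈ V.powersetCard (n - B.card), ∏ j ∈ t', w j := by
    rw [Finset.mul_sum]
    refine Finset.sum_nbij' (fun s => s ∩ V) (fun t => B ∪ t) ?_ ?_ ?_ ?_ ?_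
    · intro s hs
      obtain ⟨t, htV, htc, rfl⟩ := (hmem s).1 hs
      simp only [hint t htV]
      exact mem_powersetCard.2 ⟨htV, htc⟩
    · intro t ht
      rw [mem_powersetCard] at ht
      exact (hmem _).2 ⟨t, ht.1, ht.2, rfl⟩
    · intro s hs
      obtain ⟨t, htV, htc, rfl⟩ := (hmem s).1 hs
      simp only [hint t htV]
    · intro t ht
      rw [mem_powersetCard] at ht
      simp only [hint t ht.1]
    · intro s hs
      obtain ⟨t, htV, htc, rfl⟩ := (hmem s).1 hs
      have hdisj : Disjoint B t := hBV.mono_right htV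
      simp only [hint t htV, prod_union hdisj]
  constructor
  · rw [← Finset.sum_div, hsum]
    positivity
  · intro t htV htc
    have hdisj : Disjoint B t := hBV.mono_right htV
    -- the double filter is the singleton {B ∪ t}
    have hfilt : (U.powersetCard n).filter (fun s => s \ V = B ∧ s ∩ V = t) = {B ∪ t} := by
      ext s
      simp only [mem_filter, mem_singleton]
      constructor
      · rintro ⟨hs, h1, h2⟩
        rw [← h1, ← h2, sdiff_union_inter]
      · rintro rfl
        have hmem' := (hmem (B ∪ t)).2 ⟨t, htV, htc, rfl⟩
        rw [mem_filter] at hmem'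
        refine ⟨hmem'.1, hmem'.2, ?_⟩
        exact hint t htV
    rw [hfilt, sum_singleton, prod_union hdisj, ← Finset.sum_div, hsum]
    field_simp
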